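/- Necessity of the 3-connectivity criterion: let Γ be a finite simple graph embedded in the 2-sphere with N ≥ 4 vertices, all lying on a Hamiltonian cycle γ whose edges are edges of Γ. If some pair of vertices v₁, v₂ is joined both by an edge of Γ lying (apart from its endpoints) in one open complementary region of γ and by an edge lying in the other open complementary region, then Γ is not 3-connected: removing v₁ and v₂ disconnects Γ. -/
import Mathlib


/-- `x` lies strictly between `a` and `b` going in the positive cyclic direction on
the Hamiltonian cycle `0, 1, …, N-1`. -/
def CyclicBtw {N : ℕ} (a b x : Fin N) : Prop :=
  x ≠ a ∧ x ≠ b ∧ (x - a).val < (b - a).val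

/-- Two chords `{a, b}` and `{c, d}` of the cycle cross: `c` lies strictly on one of
the two arcs determined by `a` and `b`, and `d` strictly on the other. -/
def ChordCross {N : ℕ} (a b c d : Fin N) : Prop :=
  CyclicBtw a b c ∧ CyclicBtw b a d

/-- A symmetric relation recording the chords drawn in one of the two complementary
regions of the Hamiltonian cycle in the sphere: chords join non-adjacent vertices of
the cycle, and (by planarity of the embedding) chords in the same region are pairwise
noncrossing. -/
def IsChordRel {N : ℕ} [NeZero N] (R : Fin N → Fin N → Prop) : Prop :=
  (∀ a b, R a b → R b a) ∧
  (∀ a b, R a b → a ≠ b ∧ b ≠ a + 1 ∧ a ≠ b + 1) ∧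
  (∀ a b c d, R a b → R c d → ¬ ChordCross a b c d)

lemma subval {N : ℕ} [NeZero N] (a b : Fin N) :
    (a - b).val = if b.val ≤ a.val then a.val - b.val else a.val + N - b.val := by
  rw [Fin.sub_def]
  have ha := a.isLt; have hb := b.isLt
  show (N - b.val + a.val) % N = _
  split_ifs with h
  · have : (N - b.val + a.val) = N + (a.val - b.val) := by omega
    rw [this, Nat.add_mod_left, Nat.mod_eq_of_lt (by omega)]
  · rw [Nat.mod_eq_of_lt (by omega)]
    omega

lemma addoneval {N : ℕ} [NeZero N] (a : Fin N) :
    (a + 1).val = if a.val + 1 = N then 0 else a.val + 1 := by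
  have ha := a.isLt
  rw [Fin.add_def]
  show (a.val + (1 : Fin N).val) % N = _
  rw [Fin.val_one']
  split_ifs with h
  · rcases Nat.lt_or_ge 1 N with h2 | h2
    · rw [Nat.mod_eq_of_lt h2, h, Nat.mod_self]
    · interval_cases N
      · exact absurd rfl (NeZero.ne 0)
      · omega
  · have h2 : 1 < N := by omega
    rw [Nat.mod_eq_of_lt h2, Nat.mod_eq_of_lt (by omega)]

lemma arc_partition {N : ℕ} [NeZero N] (v₁ v₂ x : Fin N) (h1 : x ≠ v₁) (h2 : x ≠ v₂)
    (h3 : v₁ ≠ v₂) : CyclicBtw v₁ v₂ x ∨ CyclicBtw v₂ v₁ x := by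
  have a1 := v₁.isLt; have a2 := v₂.isLt; have a3 := x.isLt
  simp only [CyclicBtw, ne_eq, Fin.ext_iff, subval] at *
  split_ifs <;> omega

lemma arc_disjoint {N : ℕ} [NeZero N] (v₁ v₂ x : Fin N) (h : CyclicBtw v₁ v₂ x) :
    ¬ CyclicBtw v₂ v₁ x := by
  have a1 := v₁.isLt; have a2 := v₂.isLt; have a3 := x.isLt
  simp only [CyclicBtw, ne_eq, Fin.ext_iff, subval] at *
  split_ifs at * <;> omega

lemma arc_base {N : ℕ} [NeZero N] (hN : 2 ≤ N) (v₁ v₂ : Fin N) (h1 : v₁ ≠ v₂)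
    (h2 : v₁ + 1 ≠ v₂) : CyclicBtw v₁ v₂ (v₁ + 1) := by
  have a1 := v₁.isLt; have a2 := v₂.isLt
  simp only [CyclicBtw, ne_eq, Fin.ext_iff, subval, addoneval] at *
  split_ifs at * <;> omega

lemma arc_succ {N : ℕ} [NeZero N] (v₁ v₂ x : Fin N) (h : CyclicBtw v₁ v₂ x)
    (h2 : x + 1 ≠ v₂) : CyclicBtw v₁ v₂ (x + 1) := by
  have a1 := v₁.isLt; have a2 := v₂.isLt; have a3 := x.isLt
  simp only [CyclicBtw, ne_eq, Fin.ext_iff, subval, addoneval] at *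
  split_ifs at * <;> omega

lemma arc_pred {N : ℕ} [NeZero N] (v₁ v₂ y : Fin N) (h : CyclicBtw v₁ v₂ (y + 1))
    (h1 : y ≠ v₁) (h2 : y ≠ v₂) : CyclicBtw v₁ v₂ y := by
  have a1 := v₁.isLt; have a2 := v₂.isLt; have a3 := y.isLt
  simp only [CyclicBtw, ne_eq, Fin.ext_iff, subval, addoneval] at *
  split_ifs at * <;> omega

/-- Necessity of the 3-connectivity criterion: if a pair of vertices of `Γ` is joined
both by a top edge and by a bottom edge, then removing these two vertices disconnects
the graph, so `Γ` is not 3-connected. -/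
theorem not_three_connected_of_double_chord (N : ℕ) [NeZero N] (hN : 4 ≤ N)
    (G : SimpleGraph (Fin N)) (top bot : Fin N → Fin N → Prop)
    (htop : IsChordRel top) (hbot : IsChordRel bot)
    (hadj : ∀ u v, G.Adj u v ↔ (v = u + 1 ∨ u = v + 1 ∨ top u v ∨ bot u v))
    (v₁ v₂ : Fin N) (h1 : top v₁ v₂) (h2 : bot v₁ v₂) :
    ¬ (G.induce {x : Fin N | x ≠ v₁ ∧ x ≠ v₂}).Connected := by
  obtain ⟨hne, h12, h21⟩ := htop.2.1 v₁ v₂ h1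
  have hne' : v₂ ≠ v₁ := hne.symm
  intro hcon
  -- membership of the two endpoints
  have hp1 : (v₁ + 1 : Fin N) ∈ {x : Fin N | x ≠ v₁ ∧ x ≠ v₂} := by
    constructor
    · intro h
      have e := addoneval v₁
      rw [h] at e
      have := v₁.isLt
      split_ifs at e <;> omega
    · exact h12.symm
  have hp2 : (v₂ + 1 : Fin N) ∈ {x : Fin N | x ≠ v₁ ∧ x ≠ v₂} := by
    constructor
    · exact h21.symm
    · intro h
      have e := addoneval v₂
      rw [h] at e
      have := v₂.isLt
      split_ifs at e <;> omega
  -- the adjacency step lemma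
  have step : ∀ x y : Fin N, x ≠ v₁ → x ≠ v₂ → y ≠ v₁ → y ≠ v₂ → G.Adj x y →
      CyclicBtw v₁ v₂ x → CyclicBtw v₁ v₂ y := by
    intro x y hx1 hx2 hy1 hy2 hadjxy hx
    rcases (hadj x y).1 hadjxy with h | h | h | h
    · rw [h]; exact arc_succ v₁ v₂ x hx (h ▸ hy2)
    · exact arc_pred v₁ v₂ y (h ▸ hx) hy1 hy2
    · by_contra hy
      rcases arc_partition v₁ v₂ y hy1 hy2 hne with h' | h'
      · exact hy h'
      · exact htop.2.2 v₁ v₂ x y h1 h ⟨hx, h'⟩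
    · by_contra hy
      rcases arc_partition v₁ v₂ y hy1 hy2 hne with h' | h'
      · exact hy h'
      · exact hbot.2.2 v₁ v₂ x y h2 h ⟨hx, h'⟩
  -- walks preserve the arc
  have key : ∀ (a b : {x : Fin N | x ≠ v₁ ∧ x ≠ v₂}),
      (G.induce {x : Fin N | x ≠ v₁ ∧ x ≠ v₂}).Walk a b →
      CyclicBtw v₁ v₂ a.val → CyclicBtw v₁ v₂ b.val := by
    intro a b w
    induction w with
    | nil => exact id
    | @cons u c d h p ih =>
        intro hu
        refine ih (step u.val c.val u.2.1 u.2.2 c.2.1 c.2.2 ?_ hu)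
        exact h
  obtain ⟨w⟩ := hcon.preconnected ⟨v₁ + 1, hp1⟩ ⟨v₂ + 1, hp2⟩
  have hA1 : CyclicBtw v₁ v₂ (v₁ + 1) := arc_base (by omega) v₁ v₂ hne h12.symm
  have hA2 : CyclicBtw v₁ v₂ (v₂ + 1) := key _ _ w hA1
  have hB2 : CyclicBtw v₂ v₁ (v₂ + 1) := arc_base (by omega) v₂ v₁ hne' h21.symm
  exact arc_disjoint v₂ v₁ (v₂ + 1) hB2 hA2
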